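/- For the van der Waals gas, there exists τ₁ > b such that for all τ > τ₁ the quantity κ(τ) = −2p'(τ)/(2p'(τ)+τ p''(τ)) is positive, where p(τ) = K/(τ−b)^{γ+1} − a/τ² with K, a, b > 0, γ ∈ (0,1). -/

import Mathlib

/-- For the van der Waals gas with `p(τ) = K/(τ−b)^(γ+1) − a/τ²`, there exists `τ₁ > b`
such that for all `τ > τ₁` the quantity `κ(τ) = −2p'(τ)/(2p'(τ) + τ p''(τ))` is positive. -/
theorem vdw_kappa_pos (K a b γ : ℝ) (hK : 0 < K) (ha : 0 < a) (hb : 0 < b)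
    (hγ : 0 < γ) (hγ1 : γ < 1) :
    ∃ τ₁ : ℝ, b < τ₁ ∧ ∀ τ : ℝ, τ₁ < τ →
      0 < (-2 * (-(K * (γ + 1)) / (τ - b) ^ (γ + 2) + 2 * a / τ ^ 3)) /
          (2 * (-(K * (γ + 1)) / (τ - b) ^ (γ + 2) + 2 * a / τ ^ 3) +
            τ * (K * (γ + 1) * (γ + 2) / (τ - b) ^ (γ + 3) - 6 * a / τ ^ 4)) := by
  set M : ℝ := max (2 * a / (K * γ * (γ + 1))) 1 with hMdef
  have hM1 : (1:ℝ) ≤ M := le_max_right _ _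
  have hMpos : (0:ℝ) < M := lt_of_lt_of_le one_pos hM1
  have h1γ : (0:ℝ) < 1 - γ := by linarith
  refine ⟨max (b + 1) (M ^ ((1:ℝ) / (1 - γ))),
    lt_of_lt_of_le (by linarith) (le_max_left _ _), ?_⟩
  intro τ hτ
  have hτb1 : b + 1 < τ := lt_of_le_of_lt (le_max_left _ _) hτ
  have hτb : 0 < τ - b := by linarith
  have hτ1 : (1:ℝ) < τ := by linarith
  have hτ0 : (0:ℝ) < τ := by linarith
  have hMτ : M ^ ((1:ℝ) / (1 - γ)) < τ := lt_of_le_of_lt (le_max_right _ _) hτ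
  -- τ^(1-γ) > M
  have hpow : M < τ ^ (1 - γ) := by
    have h := Real.rpow_lt_rpow (Real.rpow_nonneg hMpos.le _) hMτ h1γ
    rwa [← Real.rpow_mul hMpos.le, one_div_mul_cancel h1γ.ne', Real.rpow_one] at h
  have hKγ : 0 < K * γ * (γ + 1) := by positivity
  have hkey0 : 2 * a < K * γ * (γ + 1) * τ ^ (1 - γ) := by
    have h1 : 2 * a / (K * γ * (γ + 1)) < τ ^ (1 - γ) :=
      lt_of_le_of_lt (le_max_left _ _) hpow
    calc 2 * a = K * γ * (γ + 1) * (2 * a / (K * γ * (γ + 1))) := by field_simp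
    _ < K * γ * (γ + 1) * τ ^ (1 - γ) := by
        exact mul_lt_mul_of_pos_left h1 hKγ
  have hA : (τ - b) ^ (γ + 2) < τ ^ (γ + 2) :=
    Real.rpow_lt_rpow hτb.le (by linarith) (by linarith)
  have hτγ2 : 0 < τ ^ (γ + 2) := Real.rpow_pos_of_pos hτ0 _
  have hsplit : τ ^ (1 - γ) * τ ^ (γ + 2) = τ ^ (3:ℕ) := by
    rw [← Real.rpow_natCast τ 3, ← Real.rpow_add hτ0]
    norm_num
    rw [show 1 - γ + (γ + 2) = ((3:ℕ):ℝ) by push_cast; ring, Real.rpow_natCast]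
  set X := (τ - b) ^ (γ + 2) with hX
  have hXpos : 0 < X := Real.rpow_pos_of_pos hτb _
  have hY : (τ - b) ^ (γ + 3) = X * (τ - b) := by
    rw [hX, show γ + 3 = (γ + 2) + 1 by ring, Real.rpow_add hτb, Real.rpow_one]
  clear_value X
  have hτ3 : (0:ℝ) < τ ^ 3 := by positivity
  -- key inequality
  have hkey : 2 * a * X < K * γ * (γ + 1) * τ ^ 3 := by
    have h2 : 2 * a * X < 2 * a * τ ^ (γ + 2) := by nlinarith
    have h3 : 2 * a * τ ^ (γ + 2) < K * γ * (γ + 1) * τ ^ (1 - γ) * τ ^ (γ + 2) := by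
      exact mul_lt_mul_of_pos_right hkey0 hτγ2
    calc 2 * a * X < 2 * a * τ ^ (γ + 2) := h2
    _ < K * γ * (γ + 1) * τ ^ (1 - γ) * τ ^ (γ + 2) := h3
    _ = K * γ * (γ + 1) * τ ^ 3 := by rw [mul_assoc, hsplit]
  -- numerator positive
  have hN : 0 < -2 * (-(K * (γ + 1)) / X + 2 * a / τ ^ 3) := by
    have hfrac : 2 * a / τ ^ 3 < K * (γ + 1) / X := by
      rw [div_lt_div_iff₀ hτ3 hXpos]
      nlinarith [mul_pos (mul_pos hK hτ3) (show (0:ℝ) < (γ+1)*(1-γ) by nlinarith)]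
    have : -(K * (γ + 1)) / X + 2 * a / τ ^ 3 < 0 := by
      rw [neg_div]; linarith
    linarith
  -- denominator positive
  have hD : 0 < 2 * (-(K * (γ + 1)) / X + 2 * a / τ ^ 3) +
      τ * (K * (γ + 1) * (γ + 2) / (τ - b) ^ (γ + 3) - 6 * a / τ ^ 4) := by
    have hform : 2 * (-(K * (γ + 1)) / X + 2 * a / τ ^ 3) +
        τ * (K * (γ + 1) * (γ + 2) / (τ - b) ^ (γ + 3) - 6 * a / τ ^ 4)
        = (K * (γ + 1) * (γ * τ + 2 * b) * τ ^ 3 - 2 * a * X * (τ - b)) /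
          (X * (τ - b) * τ ^ 3) := by
      rw [hY]
      field_simp
      ring
    rw [hform]
    apply div_pos
    · have h1 : 2*a*X*(τ-b) < K*γ*(γ+1)*τ^3*(τ-b) := mul_lt_mul_of_pos_right hkey hτb
      have h2 : 0 < K*(γ+1)*τ^3*(γ*b+2*b) :=
        mul_pos (mul_pos (mul_pos hK (by linarith)) hτ3) (by nlinarith)
      linarith [h1, h2]
    · positivity
  exact div_pos hN hD
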